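/- For all l, i, j ∈ {1,…,p−1} with i ≤ j and l < j the following identity holds in R: X_l·φ(i,j) − X_j·φ(i,l) + X_{τ(i,j)}·φ(i+j−τ(i,j), l) − X_{τ(i,l)}·φ(i+l−τ(i,l), j) = 0. In particular, this is an R-linear syzygy among the binomials φ(i,j). -/

import Mathlib

open MvPolynomial
open Fin.NatCast

/-- `ε(i,j) = i + j` if `i + j < p`, and `ε(i,j) = p` if `i + j ≥ p`. -/
def eps (p i j : ℕ) : ℕ := if i + j < p then i + j else p

/-- `τ(i,j) = 0` if `i + j < p`, and `τ(i,j) = p` if `i + j ≥ p`. -/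
def tau (p i j : ℕ) : ℕ := if i + j < p then 0 else p

/-- The binomial `φ(i,j) = X_i·X_j − X_{ε(i,j)}·X_{i+j−ε(i,j)}` for `i, j ∈ {1,…,p−1}`,
with the convention `φ(i,j) = 0` whenever `i ∉ {1,…,p−1}` or `j ∉ {1,…,p−1}`.
(The symmetry convention `φ(i,j) = φ(j,i)` holds automatically for this formula.) -/
noncomputable def phiC (K : Type*) [Field K] (p i j : ℕ) : MvPolynomial (Fin (p + 1)) K :=
  if 1 ≤ i ∧ i < p ∧ 1 ≤ j ∧ j < p then
    X ((i : ℕ) : Fin (p + 1)) * X ((j : ℕ) : Fin (p + 1)) -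
      X ((eps p i j : ℕ) : Fin (p + 1)) * X ((i + j - eps p i j : ℕ) : Fin (p + 1))
  else 0

lemma phiC_lt (K : Type*) [Field K] {p i j : ℕ} (hi : 1 ≤ i) (hi' : i < p)
    (hj : 1 ≤ j) (hj' : j < p) (h : i + j < p) :
    phiC K p i j = X ((i : ℕ) : Fin (p + 1)) * X ((j : ℕ) : Fin (p + 1)) -
      X ((i + j : ℕ) : Fin (p + 1)) * X (((0 : ℕ) : Fin (p + 1))) := by
  rw [phiC, if_pos ⟨hi, hi', hj, hj'⟩, eps, if_pos h, Nat.sub_self]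

lemma phiC_ge (K : Type*) [Field K] {p i j : ℕ} (hi : 1 ≤ i) (hi' : i < p)
    (hj : 1 ≤ j) (hj' : j < p) (h : ¬ i + j < p) :
    phiC K p i j = X ((i : ℕ) : Fin (p + 1)) * X ((j : ℕ) : Fin (p + 1)) -
      X ((p : ℕ) : Fin (p + 1)) * X ((i + j - p : ℕ) : Fin (p + 1)) := by
  rw [phiC, if_pos ⟨hi, hi', hj, hj'⟩, eps, if_neg h]

lemma phiC_zero (K : Type*) [Field K] {p j : ℕ} :
    phiC K p 0 j = 0 := by
  rw [phiC, if_neg]; simp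

/-- For `l, i, j ∈ {1,…,p−1}` with `i ≤ j` and `l < j`, the syzygy
`X_l·φ(i,j) − X_j·φ(i,l) + X_{τ(i,j)}·φ(i+j−τ(i,j), l) − X_{τ(i,l)}·φ(i+l−τ(i,l), j) = 0`
holds in `R`. -/
theorem syzygy_L
    (K : Type*) [Field K] (p : ℕ) (hp : 2 ≤ p) :
    ∀ l i j : ℕ, 1 ≤ l → l < p → 1 ≤ i → i < p → 1 ≤ j → j < p → i ≤ j → l < j →
      X ((l : ℕ) : Fin (p + 1)) * phiC K p i j -
        X ((j : ℕ) : Fin (p + 1)) * phiC K p i l +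
        X ((tau p i j : ℕ) : Fin (p + 1)) * phiC K p (i + j - tau p i j) l -
        X ((tau p i l : ℕ) : Fin (p + 1)) * phiC K p (i + l - tau p i l) j = 0 := by
  intro l i j hl1 hlp hi1 hip hj1 hjp hij hlj
  by_cases h1 : i + j < p
  · have h2 : i + l < p := by omega
    rw [tau, if_pos h1, tau, if_pos h2, Nat.sub_zero, Nat.sub_zero,
      phiC_lt K hi1 hip hj1 hjp h1, phiC_lt K hi1 hip hl1 hlp h2]
    by_cases h3 : i + j + l < p
    · rw [phiC_lt K (by omega : 1 ≤ i + j) (by omega) hl1 hlp (by omega : i + j + l < p),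
        phiC_lt K (by omega : 1 ≤ i + l) (by omega) hj1 hjp (by omega : i + l + j < p),
        (by omega : i + l + j = i + j + l)]
      ring
    · rw [phiC_ge K (by omega : 1 ≤ i + j) (by omega) hl1 hlp (by omega : ¬ i + j + l < p),
        phiC_ge K (by omega : 1 ≤ i + l) (by omega) hj1 hjp (by omega : ¬ i + l + j < p),
        (by omega : i + l + j = i + j + l)]
      ring
  · by_cases h2 : i + l < p
    · -- i + j ≥ p, i + l < p
      rw [tau, if_neg h1, tau, if_pos h2, Nat.sub_zero,
        phiC_ge K hi1 hip hj1 hjp h1, phiC_lt K hi1 hip hl1 hlp h2,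
        phiC_ge K (by omega : 1 ≤ i + l) (by omega) hj1 hjp (by omega : ¬ i + l + j < p)]
      by_cases hB : i + j = p
      · rw [(by omega : i + j - p = 0), phiC_zero,
          (by omega : i + l + j - p = l)]
        ring
      · rw [phiC_lt K (by omega : 1 ≤ i + j - p) (by omega) hl1 hlp (by omega : i + j - p + l < p),
          (by omega : i + j - p + l = i + l + j - p)]
        ring
    · -- i + j ≥ p, i + l ≥ p
      rw [tau, if_neg h1, tau, if_neg h2,
        phiC_ge K hi1 hip hj1 hjp h1, phiC_ge K hi1 hip hl1 hlp h2]
      by_cases hC : i + l = p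
      · rw [(by omega : i + l - p = 0), phiC_zero,
          phiC_lt K (by omega : 1 ≤ i + j - p) (by omega) hl1 hlp (by omega : i + j - p + l < p),
          (by omega : i + j - p + l = j)]
        ring
      · by_cases h3 : i + j - p + l < p
        · rw [phiC_lt K (by omega : 1 ≤ i + j - p) (by omega) hl1 hlp h3,
            phiC_lt K (by omega : 1 ≤ i + l - p) (by omega) hj1 hjp (by omega : i + l - p + j < p),
            (by omega : i + l - p + j = i + j - p + l)]
          ring
        · rw [phiC_ge K (by omega : 1 ≤ i + j - p) (by omega) hl1 hlp h3,
            phiC_ge K (by omega : 1 ≤ i + l - p) (by omega) hj1 hjp (by omega : ¬ i + l - p + j < p),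
            (by omega : i + l - p + j = i + j - p + l)]
          ring
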